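/- Let V be the set of vertices of the Gelfand-Cetlin polytope of the complete flag variety Fℓ_n. A vertex z = (λ^{(i)}_j) lies in at most n(n−1)/2 facets, i.e., is a regular vertex, if and only if for all 1 ≤ j ≤ i with i+2 ≤ n, not all four equalities λ^{(i)}_j = λ^{(i+1)}_{j+1} = λ^{(i+1)}_j = λ^{(i+2)}_{j+1} hold. The number of regular vertices equals n!. -/

import Mathlib

namespace GCReg

def GC (n : ℕ) (lam : ℕ → ℝ) : Set (ℕ → ℕ → ℝ) :=
  {x | (∀ i j, ¬(1 ≤ j ∧ j ≤ i ∧ i ≤ n) → x i j = 0) ∧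
    (∀ j, 1 ≤ j → j ≤ n → x n j = lam j) ∧
    (∀ i j, 1 ≤ j → j ≤ i → i < n →
      x (i + 1) j ≥ x i j ∧ x i j ≥ x (i + 1) (j + 1))}

variable {n : ℕ} {lam : ℕ → ℝ}

lemma lam_anti (hs : ∀ j, 1 ≤ j → j < n → lam (j + 1) < lam j) :
    ∀ a b, 1 ≤ a → a < b → b ≤ n → lam b < lam a := by
  intro a b h1 hab hbn
  induction b, hab using Nat.le_induction with
  | base => exact hs a h1 (by omega)
  | succ c hc ih => exact lt_trans (hs c (by omega) (by omega)) (ih (by omega))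

lemma row_anti_step {x : ℕ → ℕ → ℝ} (hx : x ∈ GC n lam)
    (hs : ∀ j, 1 ≤ j → j < n → lam (j + 1) < lam j) (i j : ℕ)
    (h1 : 1 ≤ j) (h2 : j + 1 ≤ i) (h3 : i ≤ n) : x i (j + 1) ≤ x i j := by
  obtain ⟨h0, htop, hineq⟩ := hx
  rcases Nat.lt_or_ge i n with h | h
  · exact le_trans (hineq i (j + 1) (by omega) (by omega) h).1
      (hineq i j h1 (by omega) h).2
  · have hin : i = n := by omega
    subst hin
    rw [htop j h1 (by omega), htop (j + 1) (by omega) (by omega)]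
    exact (hs j h1 (by omega)).le

lemma row_anti {x : ℕ → ℕ → ℝ} (hx : x ∈ GC n lam)
    (hs : ∀ j, 1 ≤ j → j < n → lam (j + 1) < lam j) (i j : ℕ)
    (h1 : 1 ≤ j) (hin : i ≤ n) :
    ∀ j', j ≤ j' → j' ≤ i → x i j' ≤ x i j := by
  intro j' hjj
  induction j', hjj using Nat.le_induction with
  | base => intro _; exact le_rfl
  | succ c hc ih =>
    intro h
    exact le_trans (row_anti_step hx hs i c (by omega) (by omega) hin) (ih (by omega))

def stepF (k : ℕ → ℕ) (i j : ℕ) : ℕ := if j < k i then j else j + 1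

def gIdx (n : ℕ) (k : ℕ → ℕ) : ℕ → ℕ → ℕ
  | 0, j => j
  | m + 1, j => gIdx n k m (stepF k (n - (m + 1)) j)

def vert (n : ℕ) (lam : ℕ → ℝ) (k : ℕ → ℕ) : ℕ → ℕ → ℝ :=
  fun i j => if 1 ≤ j ∧ j ≤ i ∧ i ≤ n then lam (gIdx n k (n - i) j) else 0

def Kgood (n : ℕ) (k : ℕ → ℕ) : Prop :=
  (∀ i, 1 ≤ i → i < n → 1 ≤ k i ∧ k i ≤ i + 1) ∧ ∀ i, ¬(1 ≤ i ∧ i < n) → k i = 1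

def noDouble (n : ℕ) (z : ℕ → ℕ → ℝ) : Prop :=
  ∀ i j, 1 ≤ j → j ≤ i → i < n →
    ¬(z i j = z (i + 1) j ∧ z i j = z (i + 1) (j + 1))

variable {n : ℕ} {lam : ℕ → ℝ} {k : ℕ → ℕ}

lemma extreme_parent (hs : ∀ j, 1 ≤ j → j < n → lam (j + 1) < lam j)
    {z : ℕ → ℕ → ℝ} (hz : z ∈ Set.extremePoints ℝ (GC n lam)) :
    ∀ i j, 1 ≤ j → j ≤ i → i < n → z i j = z (i + 1) j ∨ z i j = z (i + 1) (j + 1) := by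
  classical
  intro i0 j0 hj1 hji hin
  by_contra hcon
  push_neg at hcon
  obtain ⟨hL, hR⟩ := hcon
  obtain ⟨hzmem, hext⟩ := hz
  have hzmem' := hzmem
  obtain ⟨h0, htop, hineq⟩ := hzmem'
  set v := z i0 j0 with hv
  have hLgt : v < z (i0 + 1) j0 := lt_of_le_of_ne (hineq i0 j0 hj1 hji hin).1 hL
  have hRlt : z (i0 + 1) (j0 + 1) < v :=
    lt_of_le_of_ne (hineq i0 j0 hj1 hji hin).2 (fun h => hR h.symm)
  -- uniqueness of value v in row i0
  have huniq : ∀ j, 1 ≤ j → j ≤ i0 → z i0 j = v → j = j0 := by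
    intro j h1 h2 hvj
    by_contra hne
    rcases Nat.lt_or_ge j j0 with h | h
    · have hA : z i0 (j0 - 1) ≤ z i0 j :=
        row_anti hzmem hs i0 j h1 (by omega) (j0 - 1) (by omega) (by omega)
      have hB : z i0 (j0 - 1) ≥ z (i0 + 1) (j0 - 1 + 1) :=
        (hineq i0 (j0 - 1) (by omega) (by omega) hin).2
      rw [show j0 - 1 + 1 = j0 by omega] at hB
      rw [hvj] at hA
      linarith
    · have hgt : j0 < j := by omega
      have hA : z i0 j ≤ z i0 (j0 + 1) :=
        row_anti hzmem hs i0 (j0 + 1) (by omega) (by omega) j (by omega) (by omega)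
      have hB : z (i0 + 1) (j0 + 1) ≥ z i0 (j0 + 1) :=
        (hineq i0 (j0 + 1) (by omega) (by omega) hin).1
      rw [hvj] at hA
      linarith
  set χ : ℕ → ℕ → ℝ := fun a b => if 1 ≤ b ∧ b ≤ a ∧ a ≤ i0 ∧ z a b = v then 1 else 0 with hχ
  have hχ01 : ∀ a b, χ a b = 0 ∨ χ a b = 1 := by
    intro a b
    by_cases h : 1 ≤ b ∧ b ≤ a ∧ a ≤ i0 ∧ z a b = v
    · right; simp [hχ, h]
    · left; simp [hχ, h]
  -- epsilon
  set P : Finset (ℕ × ℕ) := Finset.Icc 1 n ×ˢ Finset.Icc 1 n with hP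
  set F : Finset ℝ := ((P.image fun p => z (p.1 + 1) p.2 - z p.1 p.2) ∪
      (P.image fun p => z p.1 p.2 - z (p.1 + 1) (p.2 + 1)) ∪ {1}).filter (fun r => 0 < r)
    with hF
  have hF1 : (1 : ℝ) ∈ F := by
    rw [hF, Finset.mem_filter]
    exact ⟨by simp, by norm_num⟩
  have hFne : F.Nonempty := ⟨1, hF1⟩
  set ε : ℝ := F.min' hFne / 2 with hε
  have hεpos : 0 < ε := by
    have hpos : ∀ r ∈ F, 0 < r := by
      intro r hr
      rw [hF, Finset.mem_filter] at hr
      exact hr.2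
    show 0 < F.min' hFne / 2
    linarith [hpos _ (F.min'_mem hFne)]
  have hgapL : ∀ a b, 1 ≤ b → b ≤ a → a < n → z a b < z (a + 1) b →
      2 * ε ≤ z (a + 1) b - z a b := by
    intro a b h1 h2 h3 hlt
    have hmem : z (a + 1) b - z a b ∈ F := by
      rw [hF, Finset.mem_filter]
      constructor
      · apply Finset.mem_union_left
        apply Finset.mem_union_left
        rw [Finset.mem_image]
        refine ⟨(a, b), ?_, rfl⟩
        simp [hP, Finset.mem_Icc]; omega
      · linarith
    have := F.min'_le _ hmem
    show 2 * (F.min' hFne / 2) ≤ _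
    linarith
  have hgapR : ∀ a b, 1 ≤ b → b ≤ a → a < n → z (a + 1) (b + 1) < z a b →
      2 * ε ≤ z a b - z (a + 1) (b + 1) := by
    intro a b h1 h2 h3 hlt
    have hmem : z a b - z (a + 1) (b + 1) ∈ F := by
      rw [hF, Finset.mem_filter]
      constructor
      · apply Finset.mem_union_left
        apply Finset.mem_union_right
        rw [Finset.mem_image]
        refine ⟨(a, b), ?_, rfl⟩
        simp [hP, Finset.mem_Icc]; omega
      · linarith
    have := F.min'_le _ hmem
    show 2 * (F.min' hFne / 2) ≤ _
    linarith
  -- chi respects active equalities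
  have hχeqL : ∀ a b, 1 ≤ b → b ≤ a → a < n → z a b = z (a + 1) b → χ a b = χ (a + 1) b := by
    intro a b h1 h2 h3 he
    by_cases hv' : z a b = v
    · have hvp : z (a + 1) b = v := he ▸ hv'
      rcases Nat.lt_trichotomy a i0 with h | h | h
      · simp [hχ, h1, h2, hv', hvp, show b ≤ a + 1 by omega, show a ≤ i0 by omega,
          show a + 1 ≤ i0 by omega]
      · exfalso
        have hb : b = j0 := huniq b h1 (by omega) (by rw [← h]; exact hv')
        subst hb
        rw [h] at hvp
        exact absurd hvp (ne_of_gt hLgt)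
      · simp [hχ, show ¬ a ≤ i0 by omega, show ¬ a + 1 ≤ i0 by omega]
    · have hvp : ¬ z (a + 1) b = v := fun hh => hv' (he ▸ hh)
      simp [hχ, hv', hvp]
  have hχeqR : ∀ a b, 1 ≤ b → b ≤ a → a < n → z a b = z (a + 1) (b + 1) →
      χ a b = χ (a + 1) (b + 1) := by
    intro a b h1 h2 h3 he
    by_cases hv' : z a b = v
    · have hvp : z (a + 1) (b + 1) = v := he ▸ hv'
      rcases Nat.lt_trichotomy a i0 with h | h | h
      · simp [hχ, h1, h2, hv', hvp, show 1 ≤ b + 1 by omega, show b + 1 ≤ a + 1 by omega,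
          show a ≤ i0 by omega, show a + 1 ≤ i0 by omega]
      · exfalso
        have hb : b = j0 := huniq b h1 (by omega) (by rw [← h]; exact hv')
        subst hb
        rw [h] at hvp
        exact absurd hvp (ne_of_lt hRlt)
      · simp [hχ, show ¬ a ≤ i0 by omega, show ¬ a + 1 ≤ i0 by omega]
    · have hvp : ¬ z (a + 1) (b + 1) = v := fun hh => hv' (he ▸ hh)
      simp [hχ, hv', hvp]
  -- perturbed points belong to GC
  have hymem : ∀ t : ℝ, |t| ≤ ε → (fun a b => z a b + t * χ a b) ∈ GC n lam := by
    intro t ht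
    have htabs := abs_le.mp ht
    refine ⟨?_, ?_, ?_⟩
    · intro a b hnab
      have hz0 := h0 a b hnab
      have hc : χ a b = 0 := by
        rw [hχ]
        simp only
        rw [if_neg]
        rintro ⟨hb1, hba, hai, _⟩
        exact hnab ⟨hb1, hba, by omega⟩
      simp [hc, hz0]
    · intro b h1 h2
      have hc : χ n b = 0 := by
        rw [hχ]; simp only
        rw [if_neg]
        rintro ⟨_, _, hni, _⟩
        omega
      simp [hc]
      exact htop b h1 h2
    · intro a b h1 h2 h3
      have hbd : ∀ p q r s : ℕ, |t * χ p q - t * χ r s| ≤ ε := by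
        intro p q r s
        rcases hχ01 p q with h | h <;> rcases hχ01 r s with h' | h' <;>
          simp [h, h'] <;>
          first
            | linarith
            | (rw [abs_le]; constructor <;> linarith)
      constructor
      · rcases eq_or_lt_of_le ((hineq a b h1 h2 h3).1 : z a b ≤ z (a + 1) b) with he | hlt
        · have hcc := hχeqL a b h1 h2 h3 he
          simp only [ge_iff_le]
          rw [← he, hcc]
        · have hg := hgapL a b h1 h2 h3 hlt
          have := hbd a b (a + 1) b
          have habs := abs_le.mp this
          simp only [ge_iff_le]
          linarith [habs.1, habs.2]
      · rcases eq_or_lt_of_le ((hineq a b h1 h2 h3).2 : z (a + 1) (b + 1) ≤ z a b) with he | hlt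
        · have hcc := hχeqR a b h1 h2 h3 he.symm
          simp only [ge_iff_le]
          rw [he, hcc]
        · have hg := hgapR a b h1 h2 h3 hlt
          have := hbd (a + 1) (b + 1) a b
          have habs := abs_le.mp this
          simp only [ge_iff_le]
          linarith [habs.1, habs.2]
  have hy1 := hymem ε (by rw [abs_of_pos hεpos])
  have hy2 := hymem (-ε) (by rw [abs_neg, abs_of_pos hεpos])
  have hseg : z ∈ openSegment ℝ (fun a b => z a b + ε * χ a b)
      (fun a b => z a b + (-ε) * χ a b) := by
    refine ⟨1/2, 1/2, by norm_num, by norm_num, by norm_num, ?_⟩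
    funext a b
    simp only [Pi.add_apply, Pi.smul_apply, smul_eq_mul]
    ring
  have heq := hext hy1 hy2 hseg
  have hx1 : χ i0 j0 = 1 := by
    show (if 1 ≤ j0 ∧ j0 ≤ i0 ∧ i0 ≤ i0 ∧ z i0 j0 = v then (1:ℝ) else 0) = 1
    rw [if_pos ⟨hj1, hji, le_refl i0, hv.symm⟩]
  have := congrFun (congrFun heq i0) j0
  simp only [hx1, mul_one] at this
  linarith [this]

lemma extreme_of_parent {z : ℕ → ℕ → ℝ} (hzmem : z ∈ GC n lam)
    (hp : ∀ i j, 1 ≤ j → j ≤ i → i < n → z i j = z (i + 1) j ∨ z i j = z (i + 1) (j + 1)) :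
    z ∈ Set.extremePoints ℝ (GC n lam) := by
  refine ⟨hzmem, ?_⟩
  intro y hy w hw hseg
  obtain ⟨a, b, ha, hb, hab, hcomb⟩ := hseg
  have hcoord : ∀ p q, a * y p q + b * w p q = z p q := by
    intro p q
    have := congrFun (congrFun hcomb p) q
    simpa using this
  have key : ∀ m i j, n - i = m → y i j = z i j ∧ w i j = z i j := by
    intro m
    induction m with
    | zero =>
      intro i j hi
      by_cases htri : 1 ≤ j ∧ j ≤ i ∧ i ≤ n
      · have hieq : i = n := by omega
        subst hieq
        rw [hy.2.1 j htri.1 htri.2.1, hw.2.1 j htri.1 htri.2.1,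
          hzmem.2.1 j htri.1 htri.2.1]
        exact ⟨rfl, rfl⟩
      · rw [hy.1 i j htri, hw.1 i j htri, hzmem.1 i j htri]
        exact ⟨rfl, rfl⟩
    | succ m ih =>
      intro i j hi
      by_cases htri : 1 ≤ j ∧ j ≤ i ∧ i ≤ n
      · have hin : i < n := by omega
        obtain ⟨h1, h2, _⟩ := htri
        have ihL := ih (i + 1) j (by omega)
        have ihR := ih (i + 1) (j + 1) (by omega)
        rcases hp i j h1 h2 hin with he | he
        · have hy1 : y i j ≤ y (i + 1) j := (hy.2.2 i j h1 h2 hin).1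
          have hw1 : w i j ≤ w (i + 1) j := (hw.2.2 i j h1 h2 hin).1
          have hz0 : a * (y (i + 1) j - y i j) + b * (w (i + 1) j - w i j) = 0 := by
            have hc1 := hcoord i j
            have hc2 := hcoord (i + 1) j
            have : z i j = z (i + 1) j := he
            nlinarith [hc1, hc2]
          have hyy : y i j = y (i + 1) j := by nlinarith [hz0, hy1, hw1]
          have hww : w i j = w (i + 1) j := by nlinarith [hz0, hy1, hw1]
          rw [he, hyy, hww]
          exact ⟨ihL.1, ihL.2⟩
        · have hy1 : y (i + 1) (j + 1) ≤ y i j := (hy.2.2 i j h1 h2 hin).2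
          have hw1 : w (i + 1) (j + 1) ≤ w i j := (hw.2.2 i j h1 h2 hin).2
          have hz0 : a * (y i j - y (i + 1) (j + 1)) + b * (w i j - w (i + 1) (j + 1)) = 0 := by
            have hc1 := hcoord i j
            have hc2 := hcoord (i + 1) (j + 1)
            have : z i j = z (i + 1) (j + 1) := he
            nlinarith [hc1, hc2]
          have hyy : y i j = y (i + 1) (j + 1) := by nlinarith [hz0, hy1, hw1]
          have hww : w i j = w (i + 1) (j + 1) := by nlinarith [hz0, hy1, hw1]
          rw [he, hyy, hww]
          exact ⟨ihR.1, ihR.2⟩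
      · rw [hy.1 i j htri, hw.1 i j htri, hzmem.1 i j htri]
        exact ⟨rfl, rfl⟩
  funext p q; exact (key (n - p) p q rfl).1

lemma stepF_lb (i j : ℕ) (h1 : 1 ≤ j) : 1 ≤ stepF k i j := by
  unfold stepF; split <;> omega

lemma stepF_ub (i j : ℕ) (h2 : j ≤ i) : stepF k i j ≤ i + 1 := by
  unfold stepF; split <;> omega

lemma stepF_strict (i j j' : ℕ) (h : j < j') : stepF k i j < stepF k i j' := by
  unfold stepF
  split <;> split <;> omega

lemma gIdx_bounds (hk : Kgood n k) :
    ∀ m j, m ≤ n → 1 ≤ j → j ≤ n - m → 1 ≤ gIdx n k m j ∧ gIdx n k m j ≤ n := by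
  intro m
  induction m with
  | zero =>
    intro j _ h1 h2
    refine ⟨h1, ?_⟩
    show j ≤ n
    omega
  | succ m ih =>
    intro j hm h1 h2
    have hi1 : 1 ≤ n - (m + 1) := by omega
    rw [show gIdx n k (m + 1) j = gIdx n k m (stepF k (n - (m + 1)) j) from rfl]
    apply ih _ (by omega) (stepF_lb _ _ h1)
    have := stepF_ub (k := k) (n - (m + 1)) j h2
    omega

lemma gIdx_strict (hk : Kgood n k) :
    ∀ m j j', m ≤ n → 1 ≤ j → j < j' → j' ≤ n - m →
      gIdx n k m j < gIdx n k m j' := by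
  intro m
  induction m with
  | zero => intro j j' _ _ h _; exact h
  | succ m ih =>
    intro j j' hm h1 h2 h3
    rw [show gIdx n k (m + 1) j = gIdx n k m (stepF k (n - (m + 1)) j) from rfl,
      show gIdx n k (m + 1) j' = gIdx n k m (stepF k (n - (m + 1)) j') from rfl]
    apply ih _ _ (by omega) (stepF_lb _ _ h1) (stepF_strict _ _ _ h2)
    have := stepF_ub (k := k) (n - (m + 1)) j' (by omega)
    omega

lemma vert_top (h1 : 1 ≤ j) (h2 : j ≤ n) : vert n lam k n j = lam j := by
  unfold vert
  rw [if_pos ⟨h1, h2, le_refl n⟩, Nat.sub_self]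
  rfl

lemma vert_rec (h1 : 1 ≤ j) (h2 : j ≤ i) (h3 : i < n) :
    vert n lam k i j = vert n lam k (i + 1) (stepF k i j) := by
  have hstep1 : 1 ≤ stepF k i j := stepF_lb _ _ h1
  have hstep2 : stepF k i j ≤ i + 1 := stepF_ub _ _ h2
  unfold vert
  rw [if_pos ⟨h1, h2, by omega⟩, if_pos ⟨hstep1, hstep2, by omega⟩]
  have hm : n - i = (n - (i + 1)) + 1 := by omega
  rw [hm]
  rw [show gIdx n k (n - (i + 1) + 1) j
      = gIdx n k (n - (i + 1)) (stepF k (n - (n - (i + 1) + 1)) j) from rfl]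
  rw [show n - (n - (i + 1) + 1) = i by omega]

lemma vert_row_strict (hk : Kgood n k) (hs : ∀ j, 1 ≤ j → j < n → lam (j + 1) < lam j)
    (h1 : 1 ≤ j) (h2 : j + 1 ≤ i) (h3 : i ≤ n) :
    vert n lam k i (j + 1) < vert n lam k i j := by
  unfold vert
  rw [if_pos (show 1 ≤ j + 1 ∧ j + 1 ≤ i ∧ i ≤ n by omega), if_pos (show 1 ≤ j ∧ j ≤ i ∧ i ≤ n by omega)]
  have hb1 := gIdx_bounds hk (n - i) j (by omega) h1 (by omega)
  have hb2 := gIdx_bounds hk (n - i) (j + 1) (by omega) (by omega) (by omega)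
  have hst := gIdx_strict hk (n - i) j (j + 1) (by omega) h1 (by omega) (by omega)
  exact lam_anti hs _ _ hb1.1 hst hb2.2

lemma vert_mem (hk : Kgood n k) (hs : ∀ j, 1 ≤ j → j < n → lam (j + 1) < lam j) :
    vert n lam k ∈ GC n lam := by
  refine ⟨?_, ?_, ?_⟩
  · intro i j h; unfold vert; rw [if_neg h]
  · intro j h1 h2; exact vert_top h1 h2
  · intro i j h1 h2 h3
    have hrec := vert_rec (lam := lam) (k := k) h1 h2 h3
    have hrow : vert n lam k (i + 1) (j + 1) < vert n lam k (i + 1) j :=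
      vert_row_strict hk hs h1 (by omega) (by omega)
    unfold stepF at hrec
    constructor
    · by_cases hc : j < k i
      · rw [hrec, if_pos hc]
      · rw [hrec, if_neg hc]; exact hrow.le
    · by_cases hc : j < k i
      · rw [hrec, if_pos hc]; exact hrow.le
      · rw [hrec, if_neg hc]

lemma vert_parent (h1 : 1 ≤ j) (h2 : j ≤ i) (h3 : i < n) :
    vert n lam k i j = vert n lam k (i + 1) j ∨
      vert n lam k i j = vert n lam k (i + 1) (j + 1) := by
  have hrec := vert_rec (lam := lam) (k := k) h1 h2 h3
  unfold stepF at hrec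
  by_cases hc : j < k i
  · left; rw [hrec, if_pos hc]
  · right; rw [hrec, if_neg hc]

lemma vert_noDouble (hk : Kgood n k) (hs : ∀ j, 1 ≤ j → j < n → lam (j + 1) < lam j)
    (h1 : 1 ≤ j) (h2 : j ≤ i) (h3 : i < n) :
    ¬(vert n lam k i j = vert n lam k (i + 1) j ∧
      vert n lam k i j = vert n lam k (i + 1) (j + 1)) := by
  rintro ⟨ha, hb⟩
  have hrow : vert n lam k (i + 1) (j + 1) < vert n lam k (i + 1) j :=
    vert_row_strict hk hs h1 (by omega) (by omega)
  rw [ha] at hb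
  exact absurd hb (ne_of_gt hrow)

lemma vert_inj (hs : ∀ j, 1 ≤ j → j < n → lam (j + 1) < lam j)
    {k k' : ℕ → ℕ} (hk : Kgood n k) (hk' : Kgood n k')
    (he : vert n lam k = vert n lam k') : k = k' := by
  have key : ∀ (f g : ℕ → ℕ), Kgood n f → Kgood n g → vert n lam f = vert n lam g →
      ∀ i, 1 ≤ i → i < n → f i < g i → False := by
    intro f g hf hg hfg i hi1 hi2 hlt
    have hgub := (hg.1 i hi1 hi2).2
    have hf1 := (hf.1 i hi1 hi2).1
    set j := f i with hj
    have hj1 : 1 ≤ j := hf1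
    have hj2 : j ≤ i := by omega
    have e1 : vert n lam f i j = vert n lam f (i + 1) (j + 1) := by
      have := vert_rec (lam := lam) (k := f) hj1 hj2 hi2
      unfold stepF at this
      rw [if_neg (by omega)] at this
      exact this
    have e2 : vert n lam g i j = vert n lam g (i + 1) j := by
      have := vert_rec (lam := lam) (k := g) hj1 hj2 hi2
      unfold stepF at this
      rw [if_pos (by omega)] at this
      exact this
    have hrow : vert n lam f (i + 1) (j + 1) < vert n lam f (i + 1) j :=
      vert_row_strict hf hs hj1 (by omega) (by omega)
    rw [he] at * -- no-op safety
    have hij : vert n lam f i j = vert n lam g i j := by rw [hfg]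
    have hij2 : vert n lam f (i + 1) j = vert n lam g (i + 1) j := by rw [hfg]
    rw [hij, e2, ← hij2] at e1
    exact absurd e1 (ne_of_gt hrow)
  funext i
  by_cases hi : 1 ≤ i ∧ i < n
  · by_contra hne
    rcases Nat.lt_or_ge (k i) (k' i) with h | h
    · exact key k k' hk hk' he i hi.1 hi.2 h
    · have : k' i < k i := by omega
      exact key k' k hk' hk he.symm i hi.1 hi.2 this
  · rw [hk.2 i hi, hk'.2 i hi]

lemma exists_k (hs : ∀ j, 1 ≤ j → j < n → lam (j + 1) < lam j)
    {z : ℕ → ℕ → ℝ} (hz : z ∈ Set.extremePoints ℝ (GC n lam)) (hnd : noDouble n z) :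
    ∃ k, Kgood n k ∧ z = vert n lam k := by
  classical
  have hp := extreme_parent hs hz
  obtain ⟨hzmem, -⟩ := hz
  obtain ⟨h0, htop, hineq⟩ := hzmem
  set S : ℕ → Set ℕ := fun i => {j | 1 ≤ j ∧ j ≤ i ∧ z i j = z (i + 1) (j + 1)} with hS
  set k : ℕ → ℕ := fun i =>
    if 1 ≤ i ∧ i < n then (if (S i).Nonempty then sInf (S i) else i + 1) else 1 with hk
  have hkgood : Kgood n k := by
    constructor
    · intro i hi1 hi2
      rw [hk]
      simp only [if_pos (⟨hi1, hi2⟩ : 1 ≤ i ∧ i < n)]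
      by_cases hne : (S i).Nonempty
      · rw [if_pos hne]
        have hmem := Nat.sInf_mem hne
        obtain ⟨ha, hb, -⟩ := hmem
        omega
      · rw [if_neg hne]; omega
    · intro i hi
      rw [hk]
      simp only [if_neg hi]
  -- left equalities
  have hkL : ∀ i j, 1 ≤ i → i < n → 1 ≤ j → j ≤ i → j < k i → z i j = z (i + 1) j := by
    intro i j hi1 hi2 hj1 hj2 hjk
    have hnotmem : j ∉ S i := by
      rw [hk] at hjk
      simp only [if_pos (⟨hi1, hi2⟩ : 1 ≤ i ∧ i < n)] at hjk
      by_cases hne : (S i).Nonempty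
      · rw [if_pos hne] at hjk
        exact Nat.notMem_of_lt_sInf hjk
      · intro hmem; exact hne ⟨j, hmem⟩
    rcases hp i j hj1 hj2 hi2 with h | h
    · exact h
    · exact absurd (⟨hj1, hj2, h⟩ : j ∈ S i) hnotmem
  -- right equalities
  have hkR : ∀ i, 1 ≤ i → i < n → ∀ j, k i ≤ j → j ≤ i → z i j = z (i + 1) (j + 1) := by
    intro i hi1 hi2
    have hknz : (S i).Nonempty → sInf (S i) ∈ S i := Nat.sInf_mem
    intro j hkj hji
    induction j, hkj using Nat.le_induction with
    | base =>
      -- j = k i ≤ i, so S i nonempty and k i = sInf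
      have hne : (S i).Nonempty := by
        by_contra hne
        rw [hk] at hji
        simp only [if_pos (⟨hi1, hi2⟩ : 1 ≤ i ∧ i < n), if_neg hne] at hji
        omega
      have hki : k i = sInf (S i) := by
        rw [hk]
        simp only [if_pos (⟨hi1, hi2⟩ : 1 ≤ i ∧ i < n), if_pos hne]
      have hmm := hknz hne
      rw [hki]
      exact hmm.2.2
    | succ c hc ih =>
      have hic := ih (by omega)
      -- show z i (c+1) = z (i+1) (c+2)
      by_contra hne
      have heL : z i (c + 1) = z (i + 1) (c + 1) := by
        rcases hp i (c + 1) (by omega) (by omega) hi2 with h | h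
        · exact h
        · exact absurd h hne
      -- now z i c = z (i+1) (c+1) = z i (c+1), giving a double at (i-1, c)
      have hkge1 : 1 ≤ k i := (hkgood.1 i hi1 hi2).1
      have hc1 : 1 ≤ c := by omega
      have hile : c + 1 ≤ i := by omega
      have hi2' : 2 ≤ i := by omega
      have hi1n : i - 1 < n := by omega
      have hrw : i - 1 + 1 = i := by omega
      have hcon := hineq (i - 1) c hc1 (by omega) hi1n
      rw [hrw] at hcon
      -- hcon : z i c ≥ z (i-1) c ∧ z (i-1) c ≥ z i (c+1)
      have hvL : z (i - 1) c ≤ z i c := hcon.1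
      have hvR : z i (c + 1) ≤ z (i - 1) c := hcon.2
      have hveq : z (i - 1) c = z i c := by
        have : z i c = z (i + 1) (c + 1) := hic
        rw [this, ← heL] at hvL ⊢
        linarith [hvR]
      have hdbl := hnd (i - 1) c hc1 (by omega) hi1n
      rw [hrw] at hdbl
      apply hdbl
      constructor
      · exact hveq
      · rw [hveq, hic, ← heL]
  -- z equals vert k
  have hzv : ∀ m i j, n - i = m → z i j = vert n lam k i j := by
    intro m
    induction m with
    | zero =>
      intro i j him
      by_cases htri : 1 ≤ j ∧ j ≤ i ∧ i ≤ n
      · have hieq : i = n := by omega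
        subst hieq
        rw [htop j htri.1 htri.2.1, vert_top htri.1 htri.2.1]
      · rw [h0 i j htri]
        unfold vert
        rw [if_neg htri]
    | succ m ih =>
      intro i j him
      by_cases htri : 1 ≤ j ∧ j ≤ i ∧ i ≤ n
      · have hin : i < n := by omega
        obtain ⟨h1, h2, -⟩ := htri
        have hi1 : 1 ≤ i := by omega
        have hrec : z i j = z (i + 1) (stepF k i j) := by
          unfold stepF
          by_cases hc : j < k i
          · rw [if_pos hc]; exact hkL i j hi1 hin h1 h2 hc
          · rw [if_neg hc]; exact hkR i hi1 hin j (by omega) h2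
        rw [hrec, vert_rec h1 h2 hin]
        exact ih (i + 1) (stepF k i j) (by omega)
      · rw [h0 i j htri]
        unfold vert
        rw [if_neg htri]
  exact ⟨k, hkgood, funext fun i => funext fun j => hzv (n - i) i j rfl⟩

open Finset in
lemma NE_eq_sum (z : ℕ → ℕ → ℝ) :
    {p : ℕ × ℕ × Bool | 1 ≤ p.2.1 ∧ p.2.1 ≤ p.1 ∧ p.1 < n ∧
      (if p.2.2 then z p.1 p.2.1 = z (p.1 + 1) p.2.1
        else z p.1 p.2.1 = z (p.1 + 1) (p.2.1 + 1))}.ncard =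
    ∑ p ∈ Finset.Icc 1 n ×ˢ Finset.Icc 1 n,
      ((if 1 ≤ p.2 ∧ p.2 ≤ p.1 ∧ p.1 < n ∧ z p.1 p.2 = z (p.1 + 1) p.2 then 1 else 0) +
       (if 1 ≤ p.2 ∧ p.2 ≤ p.1 ∧ p.1 < n ∧ z p.1 p.2 = z (p.1 + 1) (p.2 + 1) then 1 else 0)) := by
  classical
  have hset : {p : ℕ × ℕ × Bool | 1 ≤ p.2.1 ∧ p.2.1 ≤ p.1 ∧ p.1 < n ∧
      (if p.2.2 then z p.1 p.2.1 = z (p.1 + 1) p.2.1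
        else z p.1 p.2.1 = z (p.1 + 1) (p.2.1 + 1))} =
      ↑((Finset.Icc 1 n ×ˢ Finset.Icc 1 n ×ˢ (Finset.univ : Finset Bool)).filter
        (fun p => 1 ≤ p.2.1 ∧ p.2.1 ≤ p.1 ∧ p.1 < n ∧
          (if p.2.2 then z p.1 p.2.1 = z (p.1 + 1) p.2.1
            else z p.1 p.2.1 = z (p.1 + 1) (p.2.1 + 1)))) := by
    ext ⟨i, j, b⟩
    simp only [Set.mem_setOf_eq, coe_filter, mem_product, mem_Icc, mem_univ, and_true]
    constructor
    · rintro ⟨ha, hb, hc, hd⟩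
      exact ⟨⟨by omega, by omega⟩, ha, hb, hc, hd⟩
    · rintro ⟨-, hcond⟩
      exact hcond
  rw [hset, Set.ncard_coe_finset, Finset.card_filter, Finset.sum_product]
  rw [Finset.sum_congr rfl (fun i _ => Finset.sum_product _ _ _)]
  rw [← Finset.sum_product']
  apply Finset.sum_congr rfl
  rintro ⟨i, j⟩ -
  rw [Fintype.sum_bool]
  norm_num

open Finset in
lemma base_count (n : ℕ) :
    ∑ p ∈ Finset.Icc 1 n ×ˢ Finset.Icc 1 n,
      (if 1 ≤ p.2 ∧ p.2 ≤ p.1 ∧ p.1 < n then (1:ℕ) else 0) = n * (n - 1) / 2 := by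
  classical
  rw [Finset.sum_product]
  have hinner : ∀ i ∈ Finset.Icc 1 n,
      (∑ j ∈ Finset.Icc 1 n, if 1 ≤ j ∧ j ≤ i ∧ i < n then (1:ℕ) else 0)
        = if i < n then i else 0 := by
    intro i hi
    rw [Finset.mem_Icc] at hi
    by_cases hin : i < n
    · rw [if_pos hin]
      have : (∑ j ∈ Finset.Icc 1 n, if 1 ≤ j ∧ j ≤ i ∧ i < n then (1:ℕ) else 0)
          = ((Finset.Icc 1 n).filter (fun j => 1 ≤ j ∧ j ≤ i ∧ i < n)).card := by
        rw [Finset.card_filter]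
      rw [this]
      have hfe : (Finset.Icc 1 n).filter (fun j => 1 ≤ j ∧ j ≤ i ∧ i < n) = Finset.Icc 1 i := by
        ext j
        simp only [Finset.mem_filter, Finset.mem_Icc]
        omega
      rw [hfe, Nat.card_Icc]
      omega
    · rw [if_neg hin]
      apply Finset.sum_eq_zero
      intro j hj
      rw [if_neg (fun hh => hin hh.2.2)]
  rw [Finset.sum_congr rfl hinner, ← Finset.sum_filter]
  have hfe : (Finset.Icc 1 n).filter (fun i => i < n) = Finset.Icc 1 (n - 1) := by
    ext i
    simp only [Finset.mem_filter, Finset.mem_Icc]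
    omega
  rw [hfe]
  have hsub : ∑ i ∈ Finset.Icc 1 (n - 1), i = ∑ i ∈ Finset.range n, i := by
    apply Finset.sum_subset
    · intro x hx
      rw [Finset.mem_Icc] at hx
      rw [Finset.mem_range]
      omega
    · intro x hx hnx
      rw [Finset.mem_range] at hx
      rw [Finset.mem_Icc] at hnx
      omega
  rw [hsub, Finset.sum_range_id]

open Finset in
lemma NE_le_iff (hs : ∀ j, 1 ≤ j → j < n → lam (j + 1) < lam j)
    {z : ℕ → ℕ → ℝ} (hz : z ∈ Set.extremePoints ℝ (GC n lam)) :
    {p : ℕ × ℕ × Bool | 1 ≤ p.2.1 ∧ p.2.1 ≤ p.1 ∧ p.1 < n ∧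
      (if p.2.2 then z p.1 p.2.1 = z (p.1 + 1) p.2.1
        else z p.1 p.2.1 = z (p.1 + 1) (p.2.1 + 1))}.ncard ≤ n * (n - 1) / 2 ↔
    noDouble n z := by
  classical
  have hp := extreme_parent hs hz
  rw [NE_eq_sum]
  constructor
  · intro hle i j hj1 hji hin
    rintro ⟨he1, he2⟩
    have hlt : ∑ p ∈ Finset.Icc 1 n ×ˢ Finset.Icc 1 n,
        (if 1 ≤ p.2 ∧ p.2 ≤ p.1 ∧ p.1 < n then (1:ℕ) else 0) <
        ∑ p ∈ Finset.Icc 1 n ×ˢ Finset.Icc 1 n,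
        ((if 1 ≤ p.2 ∧ p.2 ≤ p.1 ∧ p.1 < n ∧ z p.1 p.2 = z (p.1 + 1) p.2 then 1 else 0) +
         (if 1 ≤ p.2 ∧ p.2 ≤ p.1 ∧ p.1 < n ∧ z p.1 p.2 = z (p.1 + 1) (p.2 + 1) then 1 else 0)) := by
      apply Finset.sum_lt_sum
      · rintro ⟨a, b⟩ -
        by_cases hc : 1 ≤ b ∧ b ≤ a ∧ a < n
        · rw [if_pos hc]
          rcases hp a b hc.1 hc.2.1 hc.2.2 with h | h
          · rw [if_pos (show 1 ≤ b ∧ b ≤ a ∧ a < n ∧ z a b = z (a + 1) b from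
              ⟨hc.1, hc.2.1, hc.2.2, h⟩)]
            omega
          · rw [if_pos (show 1 ≤ b ∧ b ≤ a ∧ a < n ∧ z a b = z (a + 1) (b + 1) from
              ⟨hc.1, hc.2.1, hc.2.2, h⟩)]
            omega
        · rw [if_neg hc]
          omega
      · refine ⟨(i, j), ?_, ?_⟩
        · rw [Finset.mem_product, Finset.mem_Icc, Finset.mem_Icc]
          omega
        · dsimp only
          rw [if_pos ⟨hj1, hji, hin⟩, if_pos ⟨hj1, hji, hin, he1⟩, if_pos ⟨hj1, hji, hin, he2⟩]
          omega
    rw [base_count] at hlt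
    omega
  · intro hnd
    have hle : ∑ p ∈ Finset.Icc 1 n ×ˢ Finset.Icc 1 n,
        ((if 1 ≤ p.2 ∧ p.2 ≤ p.1 ∧ p.1 < n ∧ z p.1 p.2 = z (p.1 + 1) p.2 then 1 else 0) +
         (if 1 ≤ p.2 ∧ p.2 ≤ p.1 ∧ p.1 < n ∧ z p.1 p.2 = z (p.1 + 1) (p.2 + 1) then (1:ℕ) else 0)) ≤
        ∑ p ∈ Finset.Icc 1 n ×ˢ Finset.Icc 1 n,
        (if 1 ≤ p.2 ∧ p.2 ≤ p.1 ∧ p.1 < n then (1:ℕ) else 0) := by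
      apply Finset.sum_le_sum
      rintro ⟨a, b⟩ -
      dsimp only
      by_cases hc : 1 ≤ b ∧ b ≤ a ∧ a < n
      · rw [if_pos hc]
        have hnot := hnd a b hc.1 hc.2.1 hc.2.2
        by_cases hL : z a b = z (a + 1) b
        · have hR : ¬ z a b = z (a + 1) (b + 1) := fun hh => hnot ⟨hL, hh⟩
          rw [if_pos ⟨hc.1, hc.2.1, hc.2.2, hL⟩, if_neg (fun hh => hR hh.2.2.2)]
        · rw [if_neg (fun hh => hL hh.2.2.2)]
          by_cases hR : z a b = z (a + 1) (b + 1)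
          · rw [if_pos ⟨hc.1, hc.2.1, hc.2.2, hR⟩]
          · rw [if_neg (fun hh => hR hh.2.2.2)]
            omega
      · rw [if_neg hc, if_neg (fun hh => hc ⟨hh.1, hh.2.1, hh.2.2.1⟩),
          if_neg (fun hh => hc ⟨hh.1, hh.2.1, hh.2.2.1⟩)]
    rw [base_count] at hle
    exact hle

lemma noDouble_iff_noSquare (hs : ∀ j, 1 ≤ j → j < n → lam (j + 1) < lam j)
    {z : ℕ → ℕ → ℝ} (hzmem : z ∈ GC n lam) :
    noDouble n z ↔
    ∀ i j, 1 ≤ j → j ≤ i → i + 2 ≤ n →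
      ¬(z i j = z (i + 1) (j + 1) ∧ z (i + 1) j = z (i + 1) (j + 1) ∧
          z (i + 2) (j + 1) = z (i + 1) (j + 1)) := by
  obtain ⟨h0, htop, hineq⟩ := hzmem
  constructor
  · intro hnd i j hj1 hji hin
    rintro ⟨he1, he2, -⟩
    exact hnd i j hj1 hji (by omega) ⟨he1.trans he2.symm, he1⟩
  · intro hns i j hj1 hji hin
    rintro ⟨he1, he2⟩
    rcases Nat.lt_or_ge (i + 1) n with h | h
    · -- derive the square
      have hc1 : z (i + 1) j ≥ z (i + 2) (j + 1) := (hineq (i + 1) j hj1 (by omega) h).2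
      have hc2 : z (i + 2) (j + 1) ≥ z (i + 1) (j + 1) :=
        (hineq (i + 1) (j + 1) (by omega) (by omega) h).1
      have hsq : z (i + 2) (j + 1) = z (i + 1) (j + 1) := by
        have : z (i + 1) j = z (i + 1) (j + 1) := he1.symm.trans he2
        linarith
      exact hns i j hj1 hji (by omega) ⟨he2, he1.symm.trans he2, hsq⟩
    · -- i + 1 = n : two equal lambda values, contradiction
      have hieq : i + 1 = n := by omega
      have hl1 : z (i + 1) j = lam j := by rw [hieq]; exact htop j hj1 (by omega)
      have hl2 : z (i + 1) (j + 1) = lam (j + 1) := by rw [hieq]; exact htop (j + 1) (by omega) (by omega)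
      have : lam j = lam (j + 1) := by rw [← hl1, ← hl2, ← he1, ← he2]
      have hlt := hs j hj1 (by omega)
      linarith

def kEquiv (n : ℕ) : {k : ℕ → ℕ // Kgood n k} ≃ (∀ t : Fin (n - 1), Fin (t.1 + 2)) where
  toFun k t := ⟨k.1 (t.1 + 1) - 1, by
    have h := k.2.1 (t.1 + 1) (by omega) (by have := t.2; omega)
    omega⟩
  invFun κ := ⟨fun i => if h : 1 ≤ i ∧ i < n then (κ ⟨i - 1, by omega⟩).1 + 1 else 1, by
    constructor
    · intro i hi1 hi2
      dsimp only
      rw [dif_pos (⟨hi1, hi2⟩ : 1 ≤ i ∧ i < n)]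
      have h2 : (κ ⟨i - 1, by omega⟩).1 < (i - 1) + 2 := (κ ⟨i - 1, by omega⟩).2
      omega
    · intro i hi
      dsimp only
      rw [dif_neg hi]⟩
  left_inv k := by
    apply Subtype.ext
    funext i
    by_cases hi : 1 ≤ i ∧ i < n
    · show (if h : 1 ≤ i ∧ i < n then _ else 1) = k.1 i
      rw [dif_pos hi]
      have hrw : i - 1 + 1 = i := by omega
      have h := k.2.1 i hi.1 hi.2
      simp only [hrw]
      omega
    · show (if h : 1 ≤ i ∧ i < n then _ else 1) = k.1 i
      rw [dif_neg hi, k.2.2 i hi]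
  right_inv κ := by
    funext t
    apply Fin.ext
    dsimp only
    rw [dif_pos (show 1 ≤ t.1 + 1 ∧ t.1 + 1 < n from ⟨by omega, by have := t.2; omega⟩)]
    have h2 : ∀ x : Fin (n - 1), x = t → (κ x).1 + 1 - 1 = (κ t).1 := by
      rintro x rfl
      omega
    apply h2
    apply Fin.ext
    simp

lemma prod_range_add_two : ∀ m : ℕ, ∏ i ∈ Finset.range m, (i + 2) = Nat.factorial (m + 1) := by
  intro m
  induction m with
  | zero => simp [Nat.factorial]
  | succ m ih =>
    rw [Finset.prod_range_succ, ih, Nat.factorial_succ (m + 1)]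
    ring

lemma card_kgood (n : ℕ) (hn : 0 < n) :
    Nat.card {k : ℕ → ℕ // Kgood n k} = Nat.factorial n := by
  rw [Nat.card_congr (kEquiv n), Nat.card_eq_fintype_card, Fintype.card_pi]
  have h1 : ∀ t : Fin (n - 1), Fintype.card (Fin (t.1 + 2)) = t.1 + 2 := fun t => Fintype.card_fin _
  rw [Finset.prod_congr rfl (fun t _ => h1 t)]
  rw [Fin.prod_univ_eq_prod_range (fun i => i + 2) (n - 1)]
  rw [prod_range_add_two]
  congr 1
  omega

lemma count_regular (hn : 0 < n) (hs : ∀ j, 1 ≤ j → j < n → lam (j + 1) < lam j) :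
    {z : ℕ → ℕ → ℝ | z ∈ Set.extremePoints ℝ (GC n lam) ∧
      {p : ℕ × ℕ × Bool | 1 ≤ p.2.1 ∧ p.2.1 ≤ p.1 ∧ p.1 < n ∧
        (if p.2.2 then z p.1 p.2.1 = z (p.1 + 1) p.2.1
          else z p.1 p.2.1 = z (p.1 + 1) (p.2.1 + 1))}.ncard ≤ n * (n - 1) / 2}.ncard
      = Nat.factorial n := by
  have hseteq : {z : ℕ → ℕ → ℝ | z ∈ Set.extremePoints ℝ (GC n lam) ∧
      {p : ℕ × ℕ × Bool | 1 ≤ p.2.1 ∧ p.2.1 ≤ p.1 ∧ p.1 < n ∧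
        (if p.2.2 then z p.1 p.2.1 = z (p.1 + 1) p.2.1
          else z p.1 p.2.1 = z (p.1 + 1) (p.2.1 + 1))}.ncard ≤ n * (n - 1) / 2}
      = {z : ℕ → ℕ → ℝ | z ∈ Set.extremePoints ℝ (GC n lam) ∧ noDouble n z} := by
    ext z
    simp only [Set.mem_setOf_eq]
    exact and_congr_right fun hz => NE_le_iff hs hz
  rw [hseteq, ← Nat.card_coe_set_eq, ← card_kgood n hn]
  symm
  apply Nat.card_congr
  refine Equiv.ofBijective (fun k : {k : ℕ → ℕ // Kgood n k} =>
    (⟨vert n lam k.1,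
      extreme_of_parent (vert_mem k.2 hs) (fun i j h1 h2 h3 => vert_parent h1 h2 h3),
      fun i j h1 h2 h3 => vert_noDouble k.2 hs h1 h2 h3⟩ :
      {z : ℕ → ℕ → ℝ | z ∈ Set.extremePoints ℝ (GC n lam) ∧ noDouble n z})) ⟨?_, ?_⟩
  · intro k k' he
    have : vert n lam k.1 = vert n lam k'.1 := congrArg Subtype.val he
    exact Subtype.ext (vert_inj hs k.2 k'.2 this)
  · rintro ⟨z, hz, hnd⟩
    obtain ⟨k, hkg, hzeq⟩ := exists_k hs hz hnd
    exact ⟨⟨k, hkg⟩, Subtype.ext hzeq.symm⟩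

end GCReg

/-- Regular vertices of the Gelfand-Cetlin polytope of the complete flag variety `Fℓ_n`
(with a strictly decreasing weight `λ_1 > λ_2 > ⋯ > λ_n`).  A vertex `z = (λ^{(i)}_j)` lies
in at most `n(n−1)/2` facets — i.e. is a regular vertex — if and only if for all
`1 ≤ j ≤ i` with `i + 2 ≤ n` not all four equalities
`λ^{(i)}_j = λ^{(i+1)}_{j+1} = λ^{(i+1)}_j = λ^{(i+2)}_{j+1}` hold.  The number of regular
vertices equals `n!`.  Facets correspond to the equalities `λ^{(i)}_j = λ^{(i+1)}_j` and
`λ^{(i)}_j = λ^{(i+1)}_{j+1}`, and `numEq z` counts those satisfied by `z`. -/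
theorem regular_vertices_complete_flag (n : ℕ) (hn : 0 < n) (lam : ℕ → ℝ)
    (hstrict : ∀ j, 1 ≤ j → j < n → lam (j + 1) < lam j)
    (Δ : Set (ℕ → ℕ → ℝ))
    (hΔ : Δ = {x | (∀ i j, ¬(1 ≤ j ∧ j ≤ i ∧ i ≤ n) → x i j = 0) ∧
      (∀ j, 1 ≤ j → j ≤ n → x n j = lam j) ∧
      (∀ i j, 1 ≤ j → j ≤ i → i < n →
        x (i + 1) j ≥ x i j ∧ x i j ≥ x (i + 1) (j + 1))})
    (numEq : (ℕ → ℕ → ℝ) → ℕ)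
    (hnumEq : numEq = fun x => {p : ℕ × ℕ × Bool |
        1 ≤ p.2.1 ∧ p.2.1 ≤ p.1 ∧ p.1 < n ∧
        (if p.2.2 then x p.1 p.2.1 = x (p.1 + 1) p.2.1
          else x p.1 p.2.1 = x (p.1 + 1) (p.2.1 + 1))}.ncard) :
    (∀ z ∈ Set.extremePoints ℝ Δ,
      (numEq z ≤ n * (n - 1) / 2 ↔
        ∀ i j, 1 ≤ j → j ≤ i → i + 2 ≤ n →
          ¬(z i j = z (i + 1) (j + 1) ∧ z (i + 1) j = z (i + 1) (j + 1) ∧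
              z (i + 2) (j + 1) = z (i + 1) (j + 1)))) ∧
    {z | z ∈ Set.extremePoints ℝ Δ ∧ numEq z ≤ n * (n - 1) / 2}.ncard = Nat.factorial n := by
  subst hΔ hnumEq
  constructor
  · intro z hz
    exact (GCReg.NE_le_iff hstrict hz).trans (GCReg.noDouble_iff_noSquare hstrict hz.1)
  · exact GCReg.count_regular hn hstrict

-- #print axioms check
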